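/- Under an automorphism of the nilpotent complex structure given by a matrix σ of the form σ = [[σ¹₁, σ²₁, σ³₁],[σ¹₂, σ²₂, σ³₂],[0,0,σ³₃]] (with τ^j = Σ_k σ^j_k ω^k), the invariants transform as Δ₁(τ) = Δ₁(ω)·|Δ'|²·(σ³₃)² and Δ₂(τ) = Δ₂(ω)·|Δ'|²·|σ³₃|², where Δ' is determined by τ¹∧τ² = Δ'·ω¹∧ω². Consequently the sign of Δ₂² - |Δ₁|² is invariant, and Δ₂/|Δ₁| is invariant whenever Δ₁ ≠ 0. -/

import Mathlib

open ExteriorAlgebra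

/-- The 2-form `dω³` determined by the structure equations. -/
noncomputable def dOmega3 {V : Type*} [AddCommGroup V] [Module ℂ V]
    (ω1 ω2 bω1 bω2 : V) (ρ A B C D : ℂ) : ExteriorAlgebra ℂ V :=
  ρ • (ι ℂ ω1 * ι ℂ ω2) + A • (ι ℂ ω1 * ι ℂ bω1) + B • (ι ℂ ω1 * ι ℂ bω2) +
    C • (ι ℂ ω2 * ι ℂ bω1) + D • (ι ℂ ω2 * ι ℂ bω2)

/-- The conjugate 2-form `dω̄³`. -/
noncomputable def dOmegaBar3 {V : Type*} [AddCommGroup V] [Module ℂ V]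
    (ω1 ω2 bω1 bω2 : V) (ρ A B C D : ℂ) : ExteriorAlgebra ℂ V :=
  (starRingEnd ℂ) ρ • (ι ℂ bω1 * ι ℂ bω2) + (starRingEnd ℂ) A • (ι ℂ bω1 * ι ℂ ω1) +
    (starRingEnd ℂ) B • (ι ℂ bω1 * ι ℂ ω2) + (starRingEnd ℂ) C • (ι ℂ bω2 * ι ℂ ω1) +
    (starRingEnd ℂ) D • (ι ℂ bω2 * ι ℂ ω2)


namespace DeltaAux

variable {V : Type*} [AddCommGroup V] [Module ℂ V]

lemma sw (x y : V) : ι ℂ y * ι ℂ x = -(ι ℂ x * ι ℂ y) :=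
  eq_neg_of_add_eq_zero_left (by rw [add_comm]; exact ι_add_mul_swap x y)

lemma sw' (x y : V) (z : ExteriorAlgebra ℂ V) :
    ι ℂ y * (ι ℂ x * z) = -(ι ℂ x * (ι ℂ y * z)) := by
  rw [← mul_assoc, sw, neg_mul, mul_assoc]

lemma sq' (x : V) (z : ExteriorAlgebra ℂ V) : ι ℂ x * (ι ℂ x * z) = 0 := by
  rw [← mul_assoc, ι_sq_zero, zero_mul]

end DeltaAux

set_option maxHeartbeats 4000000

/-- Under an automorphism `σ` of the nilpotent complex structure,
`τ¹ = σ¹₁ω¹ + σ¹₂ω²`, `τ² = σ²₁ω¹ + σ²₂ω²`, `τ³ = σ³₁ω¹ + σ³₂ω² + σ³₃ω³`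
(with `εσ¹₂ = 0`), the invariants `Δ₁, Δ₂`, defined by
`dτ³∧dτ³ = 2Δ₁(τ) τ¹∧τ̄¹∧τ²∧τ̄²` and `dτ³∧dτ̄³ = 2Δ₂(τ) τ¹∧τ̄¹∧τ²∧τ̄²`, transform by
`Δ₁(τ)·|Δ'|² = Δ₁(ω)·(σ³₃)²` and `Δ₂(τ)·|Δ'|² = Δ₂(ω)·|σ³₃|²`, where
`τ¹∧τ² = Δ'·ω¹∧ω²` and `det σ = σ³₃Δ'`.  Consequently the sign of `Δ₂² - |Δ₁|²` is
invariant, and `Δ₂/|Δ₁|` is invariant whenever `Δ₁ ≠ 0`. -/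
theorem delta_transformation_law {V : Type*} [AddCommGroup V] [Module ℂ V]
    (ω1 ω2 bω1 bω2 : V) (hli : LinearIndependent ℂ ![ω1, ω2, bω1, bω2])
    (ε ρ A B C D : ℂ) (hDe : D * ε = 0)
    (s11 s12 s21 s22 s31 s32 s33 : ℂ) (hεσ : ε * s12 = 0)
    (hdet' : s11 * s22 - s12 * s21 ≠ 0) (hs33 : s33 ≠ 0) :
    -- defining equations for `Δ₁(τ)` and `Δ₂(τ)`
    ((s32 • (ε • (ι ℂ ω1 * ι ℂ bω1)) + s33 • dOmega3 ω1 ω2 bω1 bω2 ρ A B C D) *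
        (s32 • (ε • (ι ℂ ω1 * ι ℂ bω1)) + s33 • dOmega3 ω1 ω2 bω1 bω2 ρ A B C D) =
      (2 * ((A * D - B * C) * s33 ^ 2 / ((Complex.normSq (s11 * s22 - s12 * s21) : ℂ)))) •
        (ι ℂ (s11 • ω1 + s12 • ω2) * ι ℂ ((starRingEnd ℂ) s11 • bω1 + (starRingEnd ℂ) s12 • bω2) *
          ι ℂ (s21 • ω1 + s22 • ω2) *
          ι ℂ ((starRingEnd ℂ) s21 • bω1 + (starRingEnd ℂ) s22 • bω2))) ∧
    ((s32 • (ε • (ι ℂ ω1 * ι ℂ bω1)) + s33 • dOmega3 ω1 ω2 bω1 bω2 ρ A B C D) *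
        ((starRingEnd ℂ) s32 • ((starRingEnd ℂ) ε • (ι ℂ bω1 * ι ℂ ω1)) +
          (starRingEnd ℂ) s33 • dOmegaBar3 ω1 ω2 bω1 bω2 ρ A B C D) =
      (2 * ((((Complex.normSq B + Complex.normSq C -
            (A * (starRingEnd ℂ) D + (starRingEnd ℂ) A * D).re - Complex.normSq ρ) / 2 : ℝ) : ℂ) *
          (s33 * (starRingEnd ℂ) s33) / ((Complex.normSq (s11 * s22 - s12 * s21) : ℂ)))) •
        (ι ℂ (s11 • ω1 + s12 • ω2) * ι ℂ ((starRingEnd ℂ) s11 • bω1 + (starRingEnd ℂ) s12 • bω2) *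
          ι ℂ (s21 • ω1 + s22 • ω2) *
          ι ℂ ((starRingEnd ℂ) s21 • bω1 + (starRingEnd ℂ) s22 • bω2))) ∧
    -- invariance of the sign of `Δ₂² - |Δ₁|²`
    (∀ Δ₂r Δ₂τ : ℝ, ∀ Δ₁τ : ℂ,
      Δ₂r = (Complex.normSq B + Complex.normSq C -
          (A * (starRingEnd ℂ) D + (starRingEnd ℂ) A * D).re - Complex.normSq ρ) / 2 →
      Δ₁τ = (A * D - B * C) * s33 ^ 2 / ((Complex.normSq (s11 * s22 - s12 * s21) : ℂ)) →
      Δ₂τ = Δ₂r * Complex.normSq s33 / Complex.normSq (s11 * s22 - s12 * s21) →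
      ((0 < Δ₂τ ^ 2 - Complex.normSq Δ₁τ ↔ 0 < Δ₂r ^ 2 - Complex.normSq (A * D - B * C)) ∧
       (Δ₂τ ^ 2 - Complex.normSq Δ₁τ = 0 ↔ Δ₂r ^ 2 - Complex.normSq (A * D - B * C) = 0) ∧
       (A * D - B * C ≠ 0 →
         Δ₂τ / ‖Δ₁τ‖ = Δ₂r / ‖A * D - B * C‖))) := by
  have hc : (starRingEnd ℂ) (s11 * s22 - s12 * s21) ≠ 0 := by
    intro h
    exact hdet' (by simpa using congrArg (starRingEnd ℂ) h)
  have hz : (((A * (starRingEnd ℂ) D + (starRingEnd ℂ) A * D).re : ℝ) : ℂ)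
      = A * (starRingEnd ℂ) D + (starRingEnd ℂ) A * D := by
    refine Complex.conj_eq_iff_re.mp ?_
    simp only [map_add, map_mul, Complex.conj_conj]
    ring
  refine ⟨?_, ?_, ?_⟩
  · rcases mul_eq_zero.mp hDe with h | h <;> subst h <;>
    · simp only [dOmega3, map_add, map_smul, smul_add, smul_smul, mul_add, add_mul,
        smul_mul_assoc, mul_smul_comm, mul_assoc,
        DeltaAux.sw ω1 ω2, DeltaAux.sw ω1 bω1, DeltaAux.sw ω1 bω2, DeltaAux.sw ω2 bω1,
        DeltaAux.sw ω2 bω2, DeltaAux.sw bω1 bω2,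
        DeltaAux.sw' ω1 ω2, DeltaAux.sw' ω1 bω1, DeltaAux.sw' ω1 bω2, DeltaAux.sw' ω2 bω1,
        DeltaAux.sw' ω2 bω2, DeltaAux.sw' bω1 bω2,
        ι_sq_zero, DeltaAux.sq', mul_neg, neg_mul, smul_neg, neg_neg, mul_zero, zero_mul,
        smul_zero, zero_smul, add_zero, zero_add, neg_zero, map_zero]
      set n : ℂ := ((Complex.normSq (s11 * s22 - s12 * s21) : ℝ) : ℂ) with hn
      have hn0 : n ≠ 0 := Complex.ofReal_ne_zero.mpr (Complex.normSq_pos.mpr hdet').ne'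
      have hn2 : n = (s11 * s22 - s12 * s21) *
          ((starRingEnd ℂ) s11 * (starRingEnd ℂ) s22 -
            (starRingEnd ℂ) s12 * (starRingEnd ℂ) s21) := by
        rw [hn, ← Complex.mul_conj, map_sub, map_mul, map_mul]
      match_scalars <;> · field_simp [hn0]; rw [hn2]; ring
  · rcases mul_eq_zero.mp hDe with h | h <;> subst h <;>
    · simp only [dOmega3, dOmegaBar3, map_add, map_smul, smul_add, smul_smul, mul_add, add_mul,
        smul_mul_assoc, mul_smul_comm, mul_assoc,
        DeltaAux.sw ω1 ω2, DeltaAux.sw ω1 bω1, DeltaAux.sw ω1 bω2, DeltaAux.sw ω2 bω1,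
        DeltaAux.sw ω2 bω2, DeltaAux.sw bω1 bω2,
        DeltaAux.sw' ω1 ω2, DeltaAux.sw' ω1 bω1, DeltaAux.sw' ω1 bω2, DeltaAux.sw' ω2 bω1,
        DeltaAux.sw' ω2 bω2, DeltaAux.sw' bω1 bω2,
        ι_sq_zero, DeltaAux.sq', mul_neg, neg_mul, smul_neg, neg_neg, mul_zero, zero_mul,
        smul_zero, zero_smul, add_zero, zero_add, neg_zero, map_zero]
      simp only [Complex.ofReal_div, Complex.ofReal_sub, Complex.ofReal_add,
        Complex.ofReal_ofNat, Complex.zero_re, Complex.ofReal_zero, hz]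
      simp only [← Complex.mul_conj B, ← Complex.mul_conj C, ← Complex.mul_conj ρ]
      set n : ℂ := ((Complex.normSq (s11 * s22 - s12 * s21) : ℝ) : ℂ) with hn
      have hn0 : n ≠ 0 := Complex.ofReal_ne_zero.mpr (Complex.normSq_pos.mpr hdet').ne'
      have hn2 : n = (s11 * s22 - s12 * s21) *
          ((starRingEnd ℂ) s11 * (starRingEnd ℂ) s22 -
            (starRingEnd ℂ) s12 * (starRingEnd ℂ) s21) := by
        rw [hn, ← Complex.mul_conj, map_sub, map_mul, map_mul]
      match_scalars <;> · field_simp [hn0]; rw [hn2]; ring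
  · intro Δ₂r Δ₂τ Δ₁τ h2r h1t h2t
    have hNpos : 0 < Complex.normSq (s11 * s22 - s12 * s21) := Complex.normSq_pos.mpr hdet'
    have hn3 : 0 < Complex.normSq s33 := Complex.normSq_pos.mpr hs33
    have hnormSq1 : Complex.normSq Δ₁τ = Complex.normSq (A * D - B * C) *
        (Complex.normSq s33) ^ 2 / (Complex.normSq (s11 * s22 - s12 * s21)) ^ 2 := by
      rw [h1t, Complex.normSq_div, Complex.normSq_mul, sq, Complex.normSq_mul,
        Complex.normSq_ofReal]
      ring
    have key : Δ₂τ ^ 2 - Complex.normSq Δ₁τ = (Δ₂r ^ 2 - Complex.normSq (A * D - B * C)) *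
        ((Complex.normSq s33) ^ 2 / (Complex.normSq (s11 * s22 - s12 * s21)) ^ 2) := by
      rw [h2t, hnormSq1]
      field_simp
    have hk : 0 < (Complex.normSq s33) ^ 2 / (Complex.normSq (s11 * s22 - s12 * s21)) ^ 2 := by
      positivity
    refine ⟨?_, ?_, ?_⟩
    · rw [key]
      constructor
      · intro h
        by_contra h'
        push_neg at h'
        nlinarith
      · intro h
        exact mul_pos h hk
    · rw [key]
      constructor
      · intro h
        rcases mul_eq_zero.mp h with h | h
        · exact h
        · exact absurd h hk.ne'
      · intro h
        rw [h, zero_mul]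
    · intro hAD
      have habs1 : ‖Δ₁τ‖ = ‖A * D - B * C‖ * Complex.normSq s33 /
          Complex.normSq (s11 * s22 - s12 * s21) := by
        rw [h1t, norm_div, norm_mul, norm_pow, Complex.sq_norm,
          Complex.norm_of_nonneg hNpos.le]
      rw [h2t, habs1]
      have habsne : ‖A * D - B * C‖ ≠ 0 := norm_ne_zero_iff.mpr hAD
      field_simp
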